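/- Let G be a profinite group and let A be the opposite of the category of finite discrete G-sets. The Yoneda-type functor sending a discrete G-set X to the functor A → Set, S ↦ Hom_{Set(G)}(S, X), induces an equivalence between the category of discrete G-sets and the category of finite-limit-preserving functors Fun^Lex(A, Set). -/

import Mathlib

open CategoryTheory Limits

universe u

/-- A discrete `G`-set for a topological group `G`: a `G`-set all of whose stabilizers are
open subgroups. -/
structure DGSet (G : Type u) [Group G] [TopologicalSpace G] where
  carrier : Type u
  [mulAction : MulAction G carrier]
  isOpen_stabilizer : ∀ x : carrier, IsOpen ((MulAction.stabilizer G x : Subgroup G) : Set G)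

attribute [instance] DGSet.mulAction

variable (G : Type u) [Group G] [TopologicalSpace G]

instance : Category.{u} (DGSet G) where
  Hom X Y := {f : X.carrier → Y.carrier // ∀ (g : G) (x : X.carrier), f (g • x) = g • f x}
  id X := ⟨fun x => x, fun _ _ => rfl⟩
  comp f g := ⟨fun x => g.1 (f.1 x), fun γ x => by simp only [f.2, g.2]⟩
  id_comp := by intros; rfl
  comp_id := by intros; rfl
  assoc := by intros; rfl

namespace DGSetAux

variable {G}

@[ext]
lemma hom_ext {X Y : DGSet G} {f g : X ⟶ Y} (h : ∀ x, f.1 x = g.1 x) : f = g :=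
  Subtype.ext (funext h)

@[simp] lemma comp_apply {X Y Z : DGSet G} (f : X ⟶ Y) (g : Y ⟶ Z) (x : X.carrier) :
    (f ≫ g).1 x = g.1 (f.1 x) := rfl

@[simp] lemma id_apply {X : DGSet G} (x : X.carrier) : (𝟙 X : X ⟶ X).1 x = x := rfl

/-- An isomorphism of discrete G-sets gives an equivalence of carriers. -/
def isoEquiv {X Y : DGSet G} (e : X ≅ Y) : X.carrier ≃ Y.carrier where
  toFun := e.hom.1
  invFun := e.inv.1
  left_inv x := by
    have := congrArg Subtype.val e.hom_inv_id
    exact congrFun this x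
  right_inv y := by
    have := congrArg Subtype.val e.inv_hom_id
    exact congrFun this y

section Colim

variable [IsTopologicalGroup G]
variable {J : Type} [SmallCategory J] (K : J ⥤ DGSet G)

/-- The relation generating the colimit. -/
def crel : (Σ j : J, (K.obj j).carrier) → (Σ j : J, (K.obj j).carrier) → Prop :=
  fun p q => ∃ f : p.1 ⟶ q.1, (K.map f).1 p.2 = q.2

/-- Carrier of the colimit. -/
abbrev Col : Type u := Quot (crel K)

instance : MulAction G (Col K) where
  smul g := Quot.map (fun p => ⟨p.1, g • p.2⟩)
    (by rintro ⟨j, x⟩ ⟨j', y⟩ ⟨f, hf⟩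
        exact ⟨f, by rw [(K.map f).2]; exact congrArg _ hf⟩)
  one_smul := by
    rintro ⟨⟨j, x⟩⟩
    exact congrArg (Quot.mk _) (by simp)
  mul_smul g h := by
    rintro ⟨⟨j, x⟩⟩
    exact congrArg (Quot.mk _) (by simp [mul_smul])

omit [IsTopologicalGroup G] in
@[simp] lemma smul_mk (g : G) (j : J) (x : (K.obj j).carrier) :
    (g • Quot.mk (crel K) ⟨j, x⟩ : Col K) = Quot.mk (crel K) ⟨j, g • x⟩ := rfl

/-- The colimit as a discrete `G`-set. -/
def colimObj : DGSet G where
  carrier := Col K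
  isOpen_stabilizer := by
    rintro ⟨⟨j, x⟩⟩
    refine Subgroup.isOpen_mono (H₁ := MulAction.stabilizer G x) ?_
      ((K.obj j).isOpen_stabilizer x)
    intro g hg
    have hx : g • x = x := hg
    show g • Quot.mk (crel K) ⟨j, x⟩ = Quot.mk (crel K) ⟨j, x⟩
    rw [smul_mk, hx]

/-- The colimit cocone. -/
def colimCocone : Cocone K where
  pt := colimObj K
  ι :=
    { app := fun j => ⟨fun x => Quot.mk _ ⟨j, x⟩, fun g x => rfl⟩
      naturality := fun j j' f => by
        ext x
        exact (Quot.sound ⟨f, rfl⟩).symm }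

/-- The colimit cocone is a colimit. -/
def colimIsColimit : IsColimit (colimCocone K) where
  desc s := ⟨Quot.lift (fun p => (s.ι.app p.1).1 p.2)
      (by rintro ⟨j, x⟩ ⟨j', y⟩ ⟨f, hf⟩
          have := congrArg Subtype.val (s.ι.naturality f)
          have := congrFun this x
          simp only [Functor.const_obj_obj, Functor.const_obj_map, Category.comp_id] at this
          rw [show y = (K.map f).1 x from hf.symm]
          exact this.symm),
      by rintro g ⟨⟨j, x⟩⟩; exact (s.ι.app j).2 g x⟩
  fac s j := rfl
  uniq s m hm := by
    ext x
    obtain ⟨⟨j, y⟩⟩ := x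
    have := congrArg Subtype.val (hm j)
    exact congrFun this y

instance : HasColimitsOfShape J (DGSet G) where
  has_colimit K := HasColimit.mk ⟨colimCocone K, colimIsColimit K⟩

instance : HasFiniteColimits (DGSet G) where
  out _ := inferInstance

lemma closedFinite {J : Type} [SmallCategory J] [FinCategory J] :
    ObjectProperty.IsClosedUnderColimitsOfShape (fun X : DGSet G => Finite X.carrier) J := by
  constructor
  rintro X ⟨⟨K, ι, hc⟩, hK⟩
  haveI : Fintype J := FinCategory.fintypeObj
  haveI : ∀ j, Finite (K.obj j).carrier := hK
  haveI : Finite (Σ j : J, (K.obj j).carrier) := inferInstance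
  haveI : Finite (Col K) := Finite.of_surjective (Quot.mk _) Quot.mk_surjective
  have e : X ≅ colimObj K := hc.coconePointUniqueUpToIso (colimIsColimit K)
  exact Finite.of_equiv (Col K) (isoEquiv e).symm

end Colim

end DGSetAux

namespace DGSetAux

variable {G} [IsTopologicalGroup G]

/-- The category of finite discrete `G`-sets. -/
abbrev FinC (G : Type u) [Group G] [TopologicalSpace G] :=
  ObjectProperty.FullSubcategory (fun X : DGSet G => Finite X.carrier)

/-- Inclusion. -/
abbrev incl (G : Type u) [Group G] [TopologicalSpace G] : FinC G ⥤ DGSet G :=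
  ObjectProperty.ι _

instance : HasFiniteColimits (FinC G) where
  out J _ _ := by
    haveI := closedFinite (G := G) (J := J)
    exact hasColimitsOfShape_of_closedUnderColimits J _

noncomputable instance : PreservesFiniteColimits (incl G) where
  preservesFiniteColimits J _ _ :=
    letI : CreatesColimitsOfShape J (incl G) :=
      haveI := closedFinite (G := G) (J := J)
      createsColimitsOfShapeFullSubcategoryInclusion J _
    inferInstance

noncomputable instance : PreservesFiniteLimits (incl G).op :=
  preservesFiniteLimits_op _

/-- The restricted-Yoneda functor. -/
def Phi0 (G : Type u) [Group G] [TopologicalSpace G] : DGSet G ⥤ ((FinC G)ᵒᵖ ⥤ Type u) :=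
  yoneda ⋙ (Functor.whiskeringLeft (FinC G)ᵒᵖ (DGSet G)ᵒᵖ (Type u)).obj (incl G).op

lemma Phi0_obj_eq (X : DGSet G) (S : (FinC G)ᵒᵖ) :
    ((Phi0 G).obj X).obj S = ((incl G).obj S.unop ⟶ X) := rfl

noncomputable instance (X : DGSet G) : PreservesFiniteLimits ((Phi0 G).obj X) := by
  show PreservesFiniteLimits ((incl G).op ⋙ yoneda.obj X)
  exact comp_preservesFiniteLimits _ _

end DGSetAux

namespace DGSetAux

variable {G} [IsTopologicalGroup G] [CompactSpace G]

/-- `G ⧸ H` as a finite discrete `G`-set, for `H` an open subgroup. -/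
def quotObj (H : Subgroup G) (hH : IsOpen (H : Set G)) : FinC G :=
  { obj :=
      { carrier := G ⧸ H
        isOpen_stabilizer := by
          intro q
          induction q using QuotientGroup.induction_on with
          | H a =>
            have hset : ((MulAction.stabilizer G ((a : G ⧸ H))) : Set G)
                = (fun g => a⁻¹ * g * a) ⁻¹' (H : Set G) := by
              ext g
              simp only [SetLike.mem_coe, MulAction.mem_stabilizer_iff, Set.mem_preimage]
              show (g • (a : G ⧸ H) = (a : G ⧸ H)) ↔ _
              rw [MulAction.Quotient.smul_coe, QuotientGroup.eq]
              constructor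
              · intro h
                have := H.inv_mem h
                simpa [mul_assoc, mul_inv_rev] using this
              · intro h
                have := H.inv_mem h
                simpa [mul_assoc, mul_inv_rev] using this
            rw [hset]
            exact hH.preimage (by continuity) }
    property := Subgroup.quotient_finite_of_isOpen H hH }

/-- The equivariant map `G ⧸ H → X` sending `aH ↦ a • x`, for `H ≤ stab x`. -/
def quotMap {H : Subgroup G} (hH : IsOpen (H : Set G)) {X : DGSet G} (x : X.carrier)
    (hx : H ≤ MulAction.stabilizer G x) : (incl G).obj (quotObj H hH) ⟶ X :=
  ⟨fun q => Quotient.liftOn' q (fun g => g • x) (by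
      intro a b hab
      rw [QuotientGroup.leftRel_apply] at hab
      have : (a⁻¹ * b) • x = x := hx hab
      calc a • x = a • ((a⁻¹ * b) • x) := by rw [this]
      _ = b • x := by rw [smul_smul, mul_inv_cancel_left]),
   by
      rintro g ⟨a⟩
      show (g * a) • x = g • (a • x)
      rw [mul_smul]⟩

@[simp] lemma quotMap_mk {H : Subgroup G} (hH : IsOpen (H : Set G)) {X : DGSet G} (x : X.carrier)
    (hx : H ≤ MulAction.stabilizer G x) (a : G) :
    (quotMap hH x hx).1 (a : G ⧸ H) = a • x := rfl

/-- Translation-type maps between quotient objects. -/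
def quotHom {H K : Subgroup G} (hH : IsOpen (H : Set G)) (hK : IsOpen (K : Set G)) (g : G)
    (hg : ∀ h ∈ H, g⁻¹ * h * g ∈ K) : quotObj H hH ⟶ quotObj K hK :=
  ⟨fun q => Quotient.liftOn' q (fun a => ((a * g : G) : G ⧸ K)) (by
      intro a b hab
      rw [QuotientGroup.leftRel_apply] at hab
      apply (QuotientGroup.eq).2
      have := hg _ hab
      simpa [mul_assoc] using this),
   by
      rintro γ ⟨a⟩
      show (((γ * a) * g : G) : G ⧸ K) = γ • ((a * g : G) : G ⧸ K)
      rw [MulAction.Quotient.smul_coe, smul_eq_mul, mul_assoc]⟩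

@[simp] lemma quotHom_mk {H K : Subgroup G} (hH : IsOpen (H : Set G)) (hK : IsOpen (K : Set G))
    (g : G) (hg : ∀ h ∈ H, g⁻¹ * h * g ∈ K) (a : G) :
    (quotHom hH hK g hg).hom.1 (a : G ⧸ H) = ((a * g : G) : G ⧸ K) := rfl

end DGSetAux

namespace DGSetAux

variable {G} [IsTopologicalGroup G] [CompactSpace G]

/-- `G ⧸ stab x`. -/
abbrev stabObj {X : DGSet G} (x : X.carrier) : FinC G :=
  quotObj (MulAction.stabilizer G x) (X.isOpen_stabilizer x)

/-- The canonical map `G ⧸ stab x ⟶ X`. -/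
abbrev stabMap {X : DGSet G} (x : X.carrier) : (incl G).obj (stabObj x) ⟶ X :=
  quotMap (X.isOpen_stabilizer x) x le_rfl

/-- The function induced by a natural transformation `Φ₀ X ⟶ Φ₀ Y`. -/
def transFun {X Y : DGSet G} (α : (Phi0 G).obj X ⟶ (Phi0 G).obj Y) (x : X.carrier) :
    Y.carrier :=
  (α.app (Opposite.op (stabObj x)) (stabMap x)).1 ((1 : G) : G ⧸ MulAction.stabilizer G x)

lemma Phi0_map_app {X Y : DGSet G} (f : X ⟶ Y) (S : (FinC G)ᵒᵖ)
    (u : (incl G).obj S.unop ⟶ X) : (((Phi0 G).map f).app S) u = u ≫ f := rfl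

lemma Phi0_obj_map {X : DGSet G} {S S' : (FinC G)ᵒᵖ} (φ : S ⟶ S')
    (u : (incl G).obj S.unop ⟶ X) :
    (((Phi0 G).obj X).map φ) u = (incl G).map φ.unop ≫ u := rfl

lemma transFun_natural {X Y : DGSet G} (α : (Phi0 G).obj X ⟶ (Phi0 G).obj Y)
    (S : FinC G) (u : (incl G).obj S ⟶ X) (s : S.obj.carrier) :
    (α.app (Opposite.op S) u).1 s = transFun α (u.1 s) := by
  have hKH : MulAction.stabilizer G s ≤ MulAction.stabilizer G (u.1 s) := by
    intro k hk
    have hks : k • s = s := hk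
    show k • u.1 s = u.1 s
    rw [← u.2, hks]
  let v : quotObj (MulAction.stabilizer G s) (S.obj.isOpen_stabilizer s) ⟶ S :=
    ObjectProperty.homMk (quotMap (S.obj.isOpen_stabilizer s) s le_rfl)
  let π : quotObj (MulAction.stabilizer G s) (S.obj.isOpen_stabilizer s) ⟶ stabObj (u.1 s) :=
    quotHom _ _ 1 (fun h hh => by simpa using hKH hh)
  have eq1 : ((incl G).map v ≫ u) = (incl G).map π ≫ stabMap (u.1 s) := by
    ext q
    induction q using QuotientGroup.induction_on with
    | H a =>
      show u.1 (a • s) = (stabMap (u.1 s)).1 ((a * 1 : G) : G ⧸ _)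
      rw [u.2, mul_one]
      rfl
  have h1 := NatTrans.naturality_apply α v.op u
  have h2 := NatTrans.naturality_apply α π.op (stabMap (u.1 s))
  simp only [types_comp_apply, Phi0_obj_map, Quiver.Hom.unop_op] at h1 h2
  have h3 : (incl G).map v ≫ α.app (Opposite.op S) u
      = (incl G).map π ≫ α.app (Opposite.op (stabObj (u.1 s))) (stabMap (u.1 s)) := by
    exact h1.symm.trans ((congrArg (fun t : (incl G).obj (quotObj (MulAction.stabilizer G s)
      (S.obj.isOpen_stabilizer s)) ⟶ X =>
        α.app (Opposite.op (quotObj (MulAction.stabilizer G s) (S.obj.isOpen_stabilizer s))) t)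
        eq1).trans h2)
  have h5 := congrFun (congrArg Subtype.val h3) ((1 : G) : G ⧸ MulAction.stabilizer G s)
  simp only [comp_apply] at h5
  have hv1 : ((incl G).map v).1 ((1 : G) : G ⧸ MulAction.stabilizer G s) = s := by
    show (1 : G) • s = s
    exact one_smul G s
  have hπ1 : ((incl G).map π).1 ((1 : G) : G ⧸ MulAction.stabilizer G s)
      = ((1 : G) : G ⧸ MulAction.stabilizer G (u.1 s)) :=
    congrArg QuotientGroup.mk (mul_one 1)
  exact (congrArg (α.app (Opposite.op S) u).1 hv1).symm.trans
    (h5.trans (congrArg (α.app (Opposite.op (stabObj (u.1 s))) (stabMap (u.1 s))).1 hπ1))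

lemma transFun_smul {X Y : DGSet G} (α : (Phi0 G).obj X ⟶ (Phi0 G).obj Y)
    (g : G) (x : X.carrier) : transFun α (g • x) = g • transFun α x := by
  have h2 : (g • ((1 : G) : G ⧸ MulAction.stabilizer G x))
      = ((g : G) : G ⧸ MulAction.stabilizer G x) := by
    rw [MulAction.Quotient.smul_coe, smul_eq_mul, mul_one]
  have h3 := transFun_natural α (stabObj x) (stabMap x)
    ((g : G) : G ⧸ MulAction.stabilizer G x)
  have h4 : transFun α (g • x)
      = (α.app (Opposite.op (stabObj x)) (stabMap x)).1
          ((g : G) : G ⧸ MulAction.stabilizer G x) := by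
    rw [h3]; rfl
  rw [h4, ← h2]
  exact (α.app (Opposite.op (stabObj x)) (stabMap x)).2 g _

/-- The morphism induced by a natural transformation. -/
def transHom {X Y : DGSet G} (α : (Phi0 G).obj X ⟶ (Phi0 G).obj Y) : X ⟶ Y :=
  ⟨transFun α, fun g x => transFun_smul α g x⟩

lemma Phi0_map_transHom {X Y : DGSet G} (α : (Phi0 G).obj X ⟶ (Phi0 G).obj Y) :
    (Phi0 G).map (transHom α) = α := by
  apply NatTrans.ext
  funext S
  refine ConcreteCategory.hom_ext _ _ (fun u => ?_)
  apply hom_ext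
  intro s
  have h := transFun_natural α S.unop u s
  show transFun α (u.1 s) = (α.app S u).1 s
  rw [← h]

lemma transHom_Phi0_map {X Y : DGSet G} (f : X ⟶ Y) : transHom ((Phi0 G).map f) = f := by
  apply hom_ext
  intro x
  show f.1 ((stabMap x).1 ((1 : G) : G ⧸ MulAction.stabilizer G x)) = f.1 x
  have h : (stabMap x).1 ((1 : G) : G ⧸ MulAction.stabilizer G x) = x := one_smul G x
  rw [h]

instance : (Phi0 G).Full where
  map_surjective α := ⟨transHom α, Phi0_map_transHom α⟩

instance : (Phi0 G).Faithful where
  map_injective {X Y f g} h := by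
    rw [← transHom_Phi0_map f, ← transHom_Phi0_map g, h]

end DGSetAux

namespace DGSetAux

section EssSurj

variable {G} [IsTopologicalGroup G] [CompactSpace G]
variable (F : (FinC G)ᵒᵖ ⥤ Type u) [PreservesFiniteLimits F]

instance : HasFiniteLimits (F.Elements) :=
  ⟨fun J _ _ => inferInstance⟩

instance : IsCofiltered (F.Elements) := IsCofiltered.of_hasFiniteLimits _

/-- Carrier of an element. -/
abbrev carrierOf (e : F.Elements) : Type u := e.1.unop.obj.carrier

/-- Underlying function of a morphism of elements (contravariant). -/
def Tmap {d e : F.Elements} (f : d ⟶ e) : carrierOf F e → carrierOf F d :=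
  (f.1.unop : e.1.unop ⟶ d.1.unop).hom.1

lemma Tmap_comp {c d e : F.Elements} (f : c ⟶ d) (g : d ⟶ e) (x : carrierOf F e) :
    Tmap F (f ≫ g) x = Tmap F f (Tmap F g x) := rfl

lemma Tmap_smul {d e : F.Elements} (f : d ⟶ e) (g : G) (x : carrierOf F e) :
    Tmap F f (g • x) = g • Tmap F f x :=
  (f.1.unop : e.1.unop ⟶ d.1.unop).hom.2 g x

/-- The generating relation for the big colimit. -/
def BigRel : (Σ e : F.Elements, carrierOf F e) → (Σ e : F.Elements, carrierOf F e) → Prop :=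
  fun p q => ∃ f : q.1 ⟶ p.1, Tmap F f p.2 = q.2

/-- The big (possibly large) colimit. -/
abbrev X0 : Type (u + 1) := Quot (BigRel F)

/-- The closure of the relation. -/
def RelC (p q : Σ e : F.Elements, carrierOf F e) : Prop :=
  ∃ (c : F.Elements) (f : c ⟶ p.1) (g : c ⟶ q.1), Tmap F f p.2 = Tmap F g q.2

lemma relC_equivalence : Equivalence (RelC F) where
  refl p := ⟨p.1, 𝟙 p.1, 𝟙 p.1, rfl⟩
  symm := by
    rintro p q ⟨c, f, g, h⟩
    exact ⟨c, g, f, h.symm⟩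
  trans := by
    rintro p q r ⟨c, f, g, h1⟩ ⟨c', g', k, h2⟩
    obtain ⟨b, i, j, -⟩ := IsCofilteredOrEmpty.cone_objs c c'
    obtain ⟨a, l, hl⟩ := IsCofilteredOrEmpty.cone_maps (i ≫ g) (j ≫ g')
    refine ⟨a, l ≫ i ≫ f, l ≫ j ≫ k, ?_⟩
    have e1 : Tmap F (l ≫ i ≫ f) p.2 = Tmap F (l ≫ i) (Tmap F f p.2) := rfl
    have e2 : Tmap F (l ≫ j ≫ k) r.2 = Tmap F (l ≫ j) (Tmap F k r.2) := rfl
    rw [e1, e2, h1, ← h2]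
    have e3 : Tmap F (l ≫ i) (Tmap F g q.2) = Tmap F ((l ≫ i) ≫ g) q.2 := rfl
    have e4 : Tmap F (l ≫ j) (Tmap F g' q.2) = Tmap F ((l ≫ j) ≫ g') q.2 := rfl
    rw [e3, e4, Category.assoc, Category.assoc, hl]

lemma bigRel_le_relC : ∀ p q, BigRel F p q → RelC F p q := by
  rintro p q ⟨f, hf⟩
  exact ⟨q.1, f, 𝟙 q.1, hf⟩

lemma mk_eq_iff (p q : Σ e : F.Elements, carrierOf F e) :
    Quot.mk (BigRel F) p = Quot.mk (BigRel F) q ↔ RelC F p q := by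
  constructor
  · intro h
    exact ((relC_equivalence F).eqvGen_iff).1
      ((Quot.eqvGen_exact h).mono (bigRel_le_relC F))
  · rintro ⟨c, f, g, h⟩
    have h1 : Quot.mk (BigRel F) p = Quot.mk (BigRel F) ⟨c, Tmap F f p.2⟩ :=
      Quot.sound ⟨f, rfl⟩
    have h2 : Quot.mk (BigRel F) q = Quot.mk (BigRel F) ⟨c, Tmap F g q.2⟩ :=
      Quot.sound ⟨g, rfl⟩
    rw [h1, h2, h]

instance : MulAction G (X0 F) where
  smul g := Quot.map (fun p => ⟨p.1, g • p.2⟩)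
    (by rintro ⟨e, x⟩ ⟨e', y⟩ ⟨f, hf⟩
        exact ⟨f, by rw [Tmap_smul]; exact congrArg _ hf⟩)
  one_smul := by
    rintro ⟨⟨e, x⟩⟩
    exact congrArg (Quot.mk _) (by simp)
  mul_smul g h := by
    rintro ⟨⟨e, x⟩⟩
    exact congrArg (Quot.mk _) (by simp [mul_smul])

lemma X0_smul_mk (g : G) (e : F.Elements) (x : carrierOf F e) :
    (g • Quot.mk (BigRel F) ⟨e, x⟩ : X0 F) = Quot.mk (BigRel F) ⟨e, g • x⟩ := rfl

lemma X0_isOpen_stabilizer (z : X0 F) :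
    IsOpen ((MulAction.stabilizer G z : Subgroup G) : Set G) := by
  obtain ⟨⟨e, x⟩⟩ := z
  refine Subgroup.isOpen_mono (H₁ := MulAction.stabilizer G x) ?_
    (e.1.unop.obj.isOpen_stabilizer x)
  intro g hg
  have hx : g • x = x := hg
  show g • Quot.mk (BigRel F) ⟨e, x⟩ = Quot.mk (BigRel F) ⟨e, x⟩
  rw [X0_smul_mk]
  exact congrArg (fun t => Quot.mk (BigRel F) ⟨e, t⟩) hx

instance : Small.{u} (X0 F) := by
  refine small_of_surjective (f := fun p : Σ H : {H : Subgroup G // IsOpen (H : Set G)},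
      F.obj (Opposite.op (quotObj H.1 H.2)) =>
    (Quot.mk (BigRel F) ⟨⟨Opposite.op (quotObj p.1.1 p.1.2), p.2⟩, ((1 : G) : G ⧸ p.1.1)⟩ :
      X0 F)) ?_
  rintro ⟨⟨e, s⟩⟩
  have hopen := e.1.unop.obj.isOpen_stabilizer s
  let m : quotObj (MulAction.stabilizer G s) hopen ⟶ e.1.unop := ObjectProperty.homMk (quotMap hopen s le_rfl)
  refine ⟨⟨⟨MulAction.stabilizer G s, hopen⟩, F.map m.op e.2⟩, ?_⟩
  apply Quot.sound
  refine ⟨⟨m.op, rfl⟩, ?_⟩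
  show (1 : G) • s = s
  exact one_smul G s

/-- The discrete `G`-set associated to a left-exact functor. -/
noncomputable def XF : DGSet G where
  carrier := Shrink (X0 F)
  mulAction :=
    { smul := fun g y => equivShrink (X0 F) (g • (equivShrink (X0 F)).symm y)
      one_smul := fun y => by simp
      mul_smul := fun g h y => by simp [mul_smul] }
  isOpen_stabilizer := by
    intro y
    have hiff : ∀ g : G, g • y = y ↔ g • (equivShrink (X0 F)).symm y
        = (equivShrink (X0 F)).symm y := by
      intro g
      show equivShrink (X0 F) (g • (equivShrink (X0 F)).symm y) = y ↔ _
      rw [Equiv.apply_eq_iff_eq_symm_apply]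
    have heq : (MulAction.stabilizer G y : Set G)
        = (MulAction.stabilizer G ((equivShrink (X0 F)).symm y) : Set G) := by
      ext g
      simpa [MulAction.mem_stabilizer_iff] using hiff g
    rw [heq]
    exact X0_isOpen_stabilizer F _

lemma XF_smul_def (g : G) (y : (XF F).carrier) :
    g • y = equivShrink (X0 F) (g • (equivShrink (X0 F)).symm y) := rfl

/-- The components of the comparison natural transformation. -/
noncomputable def etaHom (S : (FinC G)ᵒᵖ) (a : F.obj S) : (incl G).obj S.unop ⟶ XF F :=
  ⟨fun s => equivShrink (X0 F) (Quot.mk (BigRel F) ⟨⟨S, a⟩, s⟩),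
   by intro g s
      exact congrArg (fun z => equivShrink (X0 F) (g • z))
        ((equivShrink (X0 F)).symm_apply_apply (Quot.mk (BigRel F) ⟨F.elementsMk S a, s⟩)).symm⟩

/-- A cone over finitely many objects in a cofiltered category. -/
lemma cone_finite {κ : Type u} [Finite κ] (k : κ → F.Elements) :
    ∃ d : F.Elements, ∀ i, Nonempty (d ⟶ k i) := by
  classical
  haveI : Fintype κ := Fintype.ofFinite κ
  obtain ⟨d, hd⟩ := IsCofiltered.inf_objs_exists (Finset.image k Finset.univ)
  exact ⟨d, fun i => hd (Finset.mem_image_of_mem k (Finset.mem_univ i))⟩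

lemma collapse_list (d : F.Elements) (L : List (carrierOf F d × carrierOf F d)) :
    ∃ (c : F.Elements) (q : c ⟶ d), ∀ pr ∈ L,
      Quot.mk (BigRel F) ⟨d, pr.1⟩ = Quot.mk (BigRel F) ⟨d, pr.2⟩ →
        Tmap F q pr.1 = Tmap F q pr.2 := by
  induction L with
  | nil => exact ⟨d, 𝟙 d, by simp⟩
  | cons pr L ih =>
    obtain ⟨c, q, hq⟩ := ih
    by_cases h : Quot.mk (BigRel F) ⟨d, pr.1⟩ = Quot.mk (BigRel F) ⟨d, pr.2⟩
    · obtain ⟨c₂, f, g, hfg⟩ := (mk_eq_iff F _ _).1 h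
      obtain ⟨c₃, h₃, hh₃⟩ := IsCofilteredOrEmpty.cone_maps f g
      obtain ⟨b, i, j, -⟩ := IsCofilteredOrEmpty.cone_objs c c₃
      obtain ⟨a, l, hl⟩ := IsCofilteredOrEmpty.cone_maps (i ≫ q) (j ≫ h₃ ≫ f)
      refine ⟨a, l ≫ i ≫ q, ?_⟩
      intro pr' hpr' hpr'eq
      rcases List.mem_cons.1 hpr' with h1 | h1
      · subst h1
        calc Tmap F (l ≫ i ≫ q) pr'.1
            = Tmap F (l ≫ j ≫ h₃ ≫ f) pr'.1 :=
              congrArg (fun m => Tmap F m pr'.1) hl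
          _ = Tmap F (l ≫ j) (Tmap F h₃ (Tmap F f pr'.1)) := rfl
          _ = Tmap F (l ≫ j) (Tmap F h₃ (Tmap F g pr'.2)) := by rw [hfg]
          _ = Tmap F (l ≫ j ≫ h₃ ≫ g) pr'.2 := rfl
          _ = Tmap F (l ≫ j ≫ h₃ ≫ f) pr'.2 := by rw [hh₃]
          _ = Tmap F (l ≫ i ≫ q) pr'.2 :=
              (congrArg (fun m => Tmap F m pr'.2) hl).symm
      · have hthis := hq pr' h1 hpr'eq
        calc Tmap F (l ≫ i ≫ q) pr'.1
            = Tmap F (l ≫ i) (Tmap F q pr'.1) := rfl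
          _ = Tmap F (l ≫ i) (Tmap F q pr'.2) := by rw [hthis]
          _ = Tmap F (l ≫ i ≫ q) pr'.2 := rfl
    · refine ⟨c, q, ?_⟩
      intro pr' hpr' hpr'eq
      rcases List.mem_cons.1 hpr' with h1 | h1
      · subst h1; exact absurd hpr'eq h
      · exact hq pr' h1 hpr'eq

lemma collapse (d : F.Elements) :
    ∃ (c : F.Elements) (q : c ⟶ d), ∀ α β : carrierOf F d,
      Quot.mk (BigRel F) ⟨d, α⟩ = Quot.mk (BigRel F) ⟨d, β⟩ →
        Tmap F q α = Tmap F q β := by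
  classical
  haveI : Finite (carrierOf F d) := d.1.unop.property
  haveI : Fintype (carrierOf F d × carrierOf F d) := Fintype.ofFinite _
  obtain ⟨c, q, hq⟩ := collapse_list F d (Finset.univ : Finset (carrierOf F d × carrierOf F d)).toList
  exact ⟨c, q, fun α β h => hq (α, β) (by simp [Finset.mem_toList]) h⟩

lemma etaHom_injective (S : (FinC G)ᵒᵖ) (a b : F.obj S) (h : etaHom F S a = etaHom F S b) :
    a = b := by
  have hmk : ∀ s : carrierOf F (⟨S, a⟩ : F.Elements),
      Quot.mk (BigRel F) ⟨⟨S, a⟩, s⟩ = Quot.mk (BigRel F) ⟨⟨S, b⟩, s⟩ := by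
    intro s
    have := congrFun (congrArg Subtype.val h) s
    exact (equivShrink (X0 F)).injective this
  obtain ⟨d, p, p', -⟩ := IsCofilteredOrEmpty.cone_objs (F.elementsMk S a) (F.elementsMk S b)
  obtain ⟨c, q, hq⟩ := collapse F d
  have key : ∀ s : carrierOf F (⟨S, a⟩ : F.Elements), Tmap F (q ≫ p) s = Tmap F (q ≫ p') s := by
    intro s
    have h1 : Quot.mk (BigRel F) ⟨⟨S, a⟩, s⟩ = Quot.mk (BigRel F) ⟨d, Tmap F p s⟩ :=
      Quot.sound ⟨p, rfl⟩
    have h2 : Quot.mk (BigRel F) ⟨⟨S, b⟩, s⟩ = Quot.mk (BigRel F) ⟨d, Tmap F p' s⟩ :=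
      Quot.sound ⟨p', rfl⟩
    have h3 : Quot.mk (BigRel F) ⟨d, Tmap F p s⟩ = Quot.mk (BigRel F) ⟨d, Tmap F p' s⟩ := by
      rw [← h1, ← h2]; exact hmk s
    exact hq _ _ h3
  have hhom : (q ≫ p).1 = (q ≫ p').1 := by
    apply Quiver.Hom.unop_inj
    apply ObjectProperty.hom_ext
    apply Subtype.ext
    funext s
    exact key s
  have ha : F.map (q ≫ p).1 c.2 = a := (q ≫ p).2
  have hb : F.map (q ≫ p').1 c.2 = b := (q ≫ p').2
  rw [← ha, ← hb, hhom]

lemma etaHom_surjective (S : (FinC G)ᵒᵖ) (u : (incl G).obj S.unop ⟶ XF F) :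
    ∃ a : F.obj S, etaHom F S a = u := by
  classical
  set u' : S.unop.obj.carrier → X0 F := fun s => (equivShrink (X0 F)).symm (u.1 s) with hu'
  have hu'smul : ∀ (g : G) (s : S.unop.obj.carrier), u' (g • s) = g • u' s := by
    intro g s
    show (equivShrink (X0 F)).symm (u.1 (g • s)) = _
    rw [u.2, XF_smul_def, Equiv.symm_apply_apply]
  have hrep : ∀ s, ∃ pp : Σ e : F.Elements, carrierOf F e, Quot.mk (BigRel F) pp = u' s :=
    fun s => Quot.exists_rep _
  choose pp hpp using hrep
  haveI : Finite S.unop.obj.carrier := S.unop.property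
  obtain ⟨d, hd⟩ := cone_finite F (fun s => (pp s).1)
  have hf : ∀ s, ∃ y : carrierOf F d, Quot.mk (BigRel F) ⟨d, y⟩ = u' s := by
    intro s
    obtain ⟨f⟩ := hd s
    refine ⟨Tmap F f (pp s).2, ?_⟩
    rw [← hpp s]
    exact (Quot.sound ⟨f, rfl⟩).symm
  choose y hy using hf
  obtain ⟨c, q, hq⟩ := collapse F d
  set z : S.unop.obj.carrier → carrierOf F c := fun s => Tmap F q (y s) with hz
  have hzmk : ∀ s, Quot.mk (BigRel F) ⟨c, z s⟩ = u' s := by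
    intro s
    rw [← hy s]
    exact (Quot.sound ⟨q, rfl⟩).symm
  have hzsmul : ∀ (g : G) (s : S.unop.obj.carrier), z (g • s) = g • z s := by
    intro g s
    have h1 : Quot.mk (BigRel F) ⟨d, y (g • s)⟩ = Quot.mk (BigRel F) ⟨d, g • y s⟩ := by
      rw [hy (g • s), hu'smul g s, ← hy s]
      rfl
    have h2 := hq _ _ h1
    rw [hz]
    show Tmap F q (y (g • s)) = g • Tmap F q (y s)
    rw [h2, Tmap_smul]
  set w : (incl G).obj S.unop ⟶ (incl G).obj c.1.unop := ⟨z, hzsmul⟩ with hw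
  refine ⟨F.map ((ObjectProperty.homMk (X := S.unop) (Y := c.1.unop) w).op : c.1 ⟶ S) c.2, ?_⟩
  apply hom_ext
  intro s
  show equivShrink (X0 F) (Quot.mk (BigRel F) ⟨⟨S, F.map (ObjectProperty.homMk (X := S.unop) (Y := c.1.unop) w).op c.2⟩, s⟩) = u.1 s
  have hrel : Quot.mk (BigRel F) (⟨⟨S, F.map (ObjectProperty.homMk (X := S.unop) (Y := c.1.unop) w).op c.2⟩, s⟩ : Σ e : F.Elements, carrierOf F e)
      = Quot.mk (BigRel F) ⟨c, z s⟩ :=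
    Quot.sound ⟨⟨(ObjectProperty.homMk (X := S.unop) (Y := c.1.unop) w).op, rfl⟩, rfl⟩
  rw [hrel, hzmk s]
  exact Equiv.apply_symm_apply _ _

lemma etaHom_natural {S S' : (FinC G)ᵒᵖ} (φ : S ⟶ S') (a : F.obj S) :
    etaHom F S' (F.map φ a) = (incl G).map φ.unop ≫ etaHom F S a := by
  apply hom_ext
  intro s'
  show equivShrink (X0 F) (Quot.mk (BigRel F) ⟨⟨S', F.map φ a⟩, s'⟩)
      = equivShrink (X0 F) (Quot.mk (BigRel F) ⟨⟨S, a⟩, ((incl G).map φ.unop).1 s'⟩)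
  congr 1
  exact Quot.sound ⟨⟨φ, rfl⟩, rfl⟩

/-- The comparison isomorphism. -/
noncomputable def theta : F ≅ (Phi0 G).obj (XF F) :=
  NatIso.ofComponents
    (fun S => (Equiv.ofBijective (fun a => etaHom F S a)
      ⟨fun a b h => etaHom_injective F S a b h, fun u => etaHom_surjective F S u⟩).toIso)
    (by
      intro S S' φ
      refine ConcreteCategory.hom_ext _ _ (fun a => ?_)
      show etaHom F S' (F.map φ a) = (((Phi0 G).obj (XF F)).map φ) (etaHom F S a)
      rw [etaHom_natural F φ a]
      rfl)

end EssSurj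

end DGSetAux

namespace DGSetAux

variable [IsTopologicalGroup G] [CompactSpace G]

/-- The lifted functor. -/
noncomputable def Phi : DGSet G ⥤
    ObjectProperty.FullSubcategory (fun F : (FinC G)ᵒᵖ ⥤ Type u => PreservesFiniteLimits F) :=
  ObjectProperty.lift _ (Phi0 G) (fun _ => inferInstance)

instance : ((Phi G) ⋙ ObjectProperty.ι
    (fun F : (FinC G)ᵒᵖ ⥤ Type u => PreservesFiniteLimits F)).Faithful :=
  inferInstanceAs (Phi0 G).Faithful

instance : ((Phi G) ⋙ ObjectProperty.ι
    (fun F : (FinC G)ᵒᵖ ⥤ Type u => PreservesFiniteLimits F)).Full :=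
  inferInstanceAs (Phi0 G).Full

instance : (Phi G).Faithful :=
  Functor.Faithful.of_comp (Phi G) (ObjectProperty.ι _)

instance : (Phi G).Full :=
  Functor.Full.of_comp_faithful (Phi G) (ObjectProperty.ι _)

instance : (Phi G).EssSurj where
  mem_essImage Y := by
    haveI : PreservesFiniteLimits Y.1 := Y.2
    exact ⟨XF Y.1, ⟨(ObjectProperty.ι _).preimageIso (theta Y.1).symm⟩⟩

instance : (Phi G).IsEquivalence where

end DGSetAux

/-- For a profinite group `G`, with `A` the opposite of the category of finite discrete
`G`-sets, the Yoneda-type functor `X ↦ (S ↦ Hom(S, X))` induces an equivalence between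
the category of discrete `G`-sets and the category of finite-limit-preserving functors
`A ⥤ Set`. -/
theorem stmt7 [IsTopologicalGroup G] [CompactSpace G] [T2Space G]
    [TotallyDisconnectedSpace G] :
    ∃ Φ : DGSet G ⥤
        ObjectProperty.FullSubcategory
          (fun F : (ObjectProperty.FullSubcategory (fun X : DGSet G => Finite X.carrier))ᵒᵖ ⥤ Type u =>
            PreservesFiniteLimits F),
      (∀ (X : DGSet G) (S : (ObjectProperty.FullSubcategory (fun X : DGSet G => Finite X.carrier))ᵒᵖ),
        (Φ.obj X).obj.obj S = ((ObjectProperty.ι _).obj S.unop ⟶ X)) ∧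
      Φ.IsEquivalence := by
  exact ⟨DGSetAux.Phi G, fun X S => rfl, inferInstance⟩
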